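/- Let n ≥ 2 and for σ = (σ₁,…,σₙ) ∈ ℂⁿ let Q_σ(t) = tⁿ + Σ_{j=1}^{n}(−1)^j σ_j t^{n−j}. Then there exists a nonzero polynomial P in n variables over ℂ such that for every σ ∈ ℂⁿ, if there exist t₁ ≠ t₂ in ℂ with Q_σ′(t₁) = Q_σ′(t₂) = 0 and Q_σ(t₁) = Q_σ(t₂), then P(σ₁,…,σₙ) = 0. (That is, the semi-local bifurcation set B_G = {σ ∈ ℂⁿ : Q_σ has two distinct critical points with equal critical values} is contained in a proper algebraic subset of ℂⁿ.) -/

import Mathlib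

/-- The general monic polynomial `Q_σ(t) = t^n + Σ_{j=1}^{n} (−1)^j σ_j t^{n−j}`,
with `σ j` (for `j : Fin n`) playing the role of `σ_{j+1}`. -/
noncomputable def genMonic (n : ℕ) (σ : Fin n → ℂ) : Polynomial ℂ :=
  Polynomial.X ^ n +
    ∑ j : Fin n, Polynomial.C ((-1) ^ ((j : ℕ) + 1) * σ j) * Polynomial.X ^ (n - ((j : ℕ) + 1))

open Polynomial Finset in
/-- `Wpoly m σ` is `Q'_σ / (m+1)`, a monic polynomial of degree `m`. -/
noncomputable def Wpoly (m : ℕ) (σ : Fin (m+1) → ℂ) : Polynomial ℂ :=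
  X ^ m + ∑ j : Fin m,
    C ((-1) ^ ((j:ℕ)+1) * (((m:ℂ) - (j:ℕ)) / ((m:ℂ)+1)) * σ j.castSucc) * X ^ (m - ((j:ℕ)+1))

open Polynomial Finset in
lemma derivative_genMonic (m : ℕ) (σ : Fin (m+1) → ℂ) :
    Polynomial.derivative (genMonic (m+1) σ) = Polynomial.C ((m:ℂ)+1) * Wpoly m σ := by
  have hne : ((m:ℂ)+1) ≠ 0 := Nat.cast_add_one_ne_zero m
  unfold genMonic Wpoly
  rw [derivative_add, derivative_X_pow, derivative_sum, mul_add, Finset.mul_sum]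
  congr 1
  · push_cast; ring_nf
  · rw [Fin.sum_univ_castSucc]
    have hlast : derivative (C ((-1) ^ (((Fin.last m : Fin (m+1)):ℕ) + 1) * σ (Fin.last m)) *
        X ^ ((m+1) - (((Fin.last m : Fin (m+1)):ℕ) + 1))) = 0 := by
      simp only [Fin.val_last, Nat.sub_self, pow_zero, mul_one, derivative_C]
    rw [hlast, add_zero]
    apply Finset.sum_congr rfl
    intro j _
    rw [derivative_C_mul_X_pow]
    have h1 : (m + 1) - (((j.castSucc : Fin (m+1)):ℕ) + 1) = m - (j:ℕ) := by
      simp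
    have h2 : m - (j:ℕ) - 1 = m - ((j:ℕ)+1) := by omega
    rw [h1, h2, ← mul_assoc, ← C_mul]
    congr 1
    have hj : (j:ℕ) ≤ m := le_of_lt j.isLt
    have : ((m - (j:ℕ) : ℕ) : ℂ) = (m:ℂ) - (j:ℕ) := by
      push_cast [Nat.cast_sub hj]; ring
    rw [Fin.coe_castSucc, this]
    field_simp

lemma exists_fn_of_card {m : ℕ} (s : Multiset ℂ) (h : Multiset.card s = m) :
    ∃ r : Fin m → ℂ, Multiset.map r Finset.univ.val = s := by
  subst h
  refine ⟨fun i => s.toList.get (Fin.cast (Multiset.length_toList s).symm i), ?_⟩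
  rw [Fin.univ_val_map, ← List.ofFn_congr (Multiset.length_toList s) _, List.ofFn_get,
    Multiset.coe_toList]

open Polynomial Finset in
lemma Wpoly_degree_lt (m : ℕ) (σ : Fin (m+1) → ℂ) :
    (∑ j : Fin m, C ((-1) ^ ((j:ℕ)+1) * (((m:ℂ) - (j:ℕ)) / ((m:ℂ)+1)) * σ j.castSucc)
      * X ^ (m - ((j:ℕ)+1))).degree < ((m : ℕ) : WithBot ℕ) := by
  apply lt_of_le_of_lt (degree_sum_le _ _)
  apply Finset.sup_lt_iff (by exact_mod_cast WithBot.bot_lt_coe m) |>.mpr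
  intro j _
  apply lt_of_le_of_lt (degree_C_mul_X_pow_le _ _)
  have hj := j.isLt
  have h2 : m - ((j:ℕ)+1) < m := by omega
  exact_mod_cast Nat.cast_lt.mpr h2

open Polynomial Finset in
lemma Wpoly_monic (m : ℕ) (σ : Fin (m+1) → ℂ) : (Wpoly m σ).Monic :=
  monic_X_pow_add (Wpoly_degree_lt m σ)

open Polynomial Finset in
lemma Wpoly_natDegree (m : ℕ) (σ : Fin (m+1) → ℂ) : (Wpoly m σ).natDegree = m := by
  apply natDegree_eq_of_degree_eq_some
  unfold Wpoly
  rw [degree_add_eq_left_of_degree_lt, degree_X_pow]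
  rw [degree_X_pow]
  exact Wpoly_degree_lt m σ

open Polynomial Finset in
lemma exists_roots_fn (m : ℕ) (σ : Fin (m+1) → ℂ) :
    ∃ r : Fin m → ℂ, Multiset.map r Finset.univ.val = (Wpoly m σ).roots ∧
      ∏ i, (X - C (r i)) = Wpoly m σ := by
  have hmonic := Wpoly_monic m σ
  have hsplits : (Wpoly m σ).Splits := IsAlgClosed.splits _
  have hcard : Multiset.card (Wpoly m σ).roots = m := by
    rw [splits_iff_card_roots.mp hsplits, Wpoly_natDegree]
  obtain ⟨r, hr⟩ := exists_fn_of_card _ hcard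
  refine ⟨r, hr, ?_⟩
  have hprod := prod_multiset_X_sub_C_of_monic_of_roots_card_eq hmonic
    (by rw [hcard, Wpoly_natDegree])
  rw [← hprod, ← hr, Multiset.map_map]
  rfl

open Polynomial Finset in
lemma Wpoly_coeff (m : ℕ) (σ : Fin (m+1) → ℂ) (k : Fin m) :
    (Wpoly m σ).coeff (m - ((k:ℕ)+1))
      = (-1) ^ ((k:ℕ)+1) * (((m:ℂ) - (k:ℕ)) / ((m:ℂ)+1)) * σ k.castSucc := by
  unfold Wpoly
  rw [coeff_add, coeff_X_pow, if_neg (by have := k.isLt; omega), zero_add, finset_sum_coeff]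
  rw [Finset.sum_eq_single k]
  · rw [coeff_C_mul, coeff_X_pow, if_pos rfl, mul_one]
  · intro j _ hj
    rw [coeff_C_mul, coeff_X_pow, if_neg, mul_zero]
    have h1 := j.isLt; have h2 := k.isLt
    intro h; exact hj (Fin.ext (by omega))
  · intro h; exact absurd (Finset.mem_univ k) h

lemma esymm_card_lt (m k : ℕ) (h : m < k) : MvPolynomial.esymm (Fin m) ℂ k = 0 := by
  unfold MvPolynomial.esymm
  rw [Finset.powersetCard_eq_empty.mpr (by simpa using h), Finset.sum_empty]

open Polynomial Finset in
lemma aeval_esymm_eq (m : ℕ) (σ : Fin (m+1) → ℂ) (r : Fin m → ℂ)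
    (hr : ∏ i, (X - C (r i)) = Wpoly m σ) (k : Fin (m+1)) :
    MvPolynomial.aeval r (MvPolynomial.esymm (Fin m) ℂ ((k:ℕ)+1))
      = (((m:ℂ) - (k:ℕ)) / ((m:ℂ)+1)) * σ k := by
  rcases Nat.lt_or_ge (k:ℕ) m with hk | hk
  · set k' : Fin m := ⟨(k:ℕ), hk⟩ with hk'def
    have hs : Multiset.card (Multiset.map r Finset.univ.val) = m := by simp
    have hcoeff := Multiset.prod_X_sub_C_coeff (Multiset.map r Finset.univ.val)
      (show m - ((k:ℕ)+1) ≤ Multiset.card (Multiset.map r Finset.univ.val) by rw [hs]; omega)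
    rw [hs] at hcoeff
    rw [show m - (m - ((k:ℕ)+1)) = (k:ℕ)+1 by omega] at hcoeff
    have hprod : ((Multiset.map r Finset.univ.val).map (fun t => X - C t)).prod = Wpoly m σ := by
      rw [Multiset.map_map, ← hr]; rfl
    have hW := Wpoly_coeff m σ k'
    have hcast : σ k'.castSucc = σ k := by congr 1
    have hval : ((k':ℕ) : ℂ) = ((k:ℕ) : ℂ) := rfl
    rw [hprod, hW] at hcoeff
    have hsq : ((-1:ℂ)^((k:ℕ)+1)) * ((-1:ℂ)^((k:ℕ)+1)) = 1 := by
      rw [← pow_add]; exact Even.neg_one_pow ⟨(k:ℕ)+1, rfl⟩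
    rw [MvPolynomial.aeval_esymm_eq_multiset_esymm]
    have hes : Multiset.esymm (Multiset.map r Finset.univ.val) ((k:ℕ)+1)
        = ((-1:ℂ)^((k:ℕ)+1)) * ((-1) ^ ((k':ℕ)+1) * (((m:ℂ) - (k':ℕ)) / ((m:ℂ)+1)) * σ k'.castSucc) := by
      rw [hcoeff, ← mul_assoc, hsq, one_mul]
    rw [hes, hcast, hval]
    rw [show ((k':ℕ)+1) = ((k:ℕ)+1) from rfl, ← mul_assoc, ← mul_assoc, hsq, one_mul]
  · have hk2 : (k:ℕ) = m := by have := k.isLt; omega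
    rw [hk2, esymm_card_lt m (m+1) (by omega), map_zero]
    simp

noncomputable def Qhat (m : ℕ) (i : Fin m) : MvPolynomial (Fin m) ℂ :=
  MvPolynomial.X i ^ (m+1) + ∑ j : Fin m,
    MvPolynomial.C ((-1) ^ ((j:ℕ)+1) * (((m:ℂ)+1) / ((m:ℂ) - (j:ℕ))))
      * MvPolynomial.esymm (Fin m) ℂ ((j:ℕ)+1) * MvPolynomial.X i ^ (m - (j:ℕ))

noncomputable def Fsym (m : ℕ) : MvPolynomial (Fin m) ℂ :=
  ∏ p ∈ Finset.univ.offDiag, (Qhat m p.1 - Qhat m p.2)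

lemma rename_Qhat (m : ℕ) (π : Equiv.Perm (Fin m)) (i : Fin m) :
    MvPolynomial.rename π (Qhat m i) = Qhat m (π i) := by
  unfold Qhat
  rw [map_add, map_pow, MvPolynomial.rename_X, map_sum]
  congr 1
  apply Finset.sum_congr rfl
  intro j _
  rw [map_mul, map_mul, MvPolynomial.rename_C, MvPolynomial.rename_esymm, map_pow,
    MvPolynomial.rename_X]

lemma Fsym_isSymmetric (m : ℕ) : (Fsym m).IsSymmetric := by
  intro π
  unfold Fsym
  rw [map_prod]
  simp_rw [map_sub, rename_Qhat]
  refine Finset.prod_bij' (fun p _ => (π p.1, π p.2)) (fun p _ => (π.symm p.1, π.symm p.2))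
    ?_ ?_ ?_ ?_ ?_
  · intro p hp
    simp only [Finset.mem_offDiag, Finset.mem_univ, true_and] at hp ⊢
    exact fun h => hp (π.injective h)
  · intro p hp
    simp only [Finset.mem_offDiag, Finset.mem_univ, true_and] at hp ⊢
    exact fun h => hp (π.symm.injective h)
  · intro p _; simp
  · intro p _; simp
  · intro p _; rfl

open Polynomial Finset in
lemma aeval_Qhat (m : ℕ) (σ : Fin (m+1) → ℂ) (r : Fin m → ℂ)
    (hr : ∏ i, (X - C (r i)) = Wpoly m σ) (i : Fin m) :
    MvPolynomial.aeval r (Qhat m i)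
      = Polynomial.eval (r i) (genMonic (m+1) σ) - (-1)^(m+1) * σ (Fin.last m) := by
  unfold Qhat genMonic
  rw [map_add, map_pow, MvPolynomial.aeval_X, map_sum, eval_add, eval_pow, eval_X,
    eval_finset_sum, Fin.sum_univ_castSucc
      (f := fun j : Fin (m+1) => Polynomial.eval (r i)
        (C ((-1) ^ ((j:ℕ) + 1) * σ j) * X ^ ((m+1) - ((j:ℕ) + 1))))]
  have hlast : Polynomial.eval (r i) (C ((-1) ^ (((Fin.last m : Fin (m+1)):ℕ) + 1) *
      σ (Fin.last m)) * X ^ ((m+1) - (((Fin.last m : Fin (m+1)):ℕ) + 1)))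
      = (-1)^(m+1) * σ (Fin.last m) := by
    simp [Fin.val_last]
  rw [hlast, add_sub_assoc, add_sub_cancel_right]
  congr 1
  apply Finset.sum_congr rfl
  intro j _
  rw [map_mul, map_mul, MvPolynomial.aeval_C, map_pow, MvPolynomial.aeval_X]
  have hesymm := aeval_esymm_eq m σ r hr (Fin.castSucc j)
  rw [show ((Fin.castSucc j : Fin (m+1)):ℕ) = (j:ℕ) from rfl] at hesymm
  rw [hesymm]
  rw [eval_mul, eval_C, eval_pow, eval_X]
  have h1 : (m + 1) - (((Fin.castSucc j : Fin (m+1)):ℕ) + 1) = m - (j:ℕ) := by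
    simp
  rw [h1, show ((Fin.castSucc j : Fin (m+1)):ℕ) = (j:ℕ) from rfl]
  have hj := j.isLt
  have hne1 : ((m:ℂ)+1) ≠ 0 := Nat.cast_add_one_ne_zero m
  have hne2 : (m:ℂ) - (j:ℕ) ≠ 0 := by
    have : ((m - (j:ℕ) : ℕ) : ℂ) = (m:ℂ) - (j:ℕ) := by
      push_cast [Nat.cast_sub (le_of_lt hj)]; ring
    rw [← this]
    exact_mod_cast Nat.sub_ne_zero_of_lt hj
  simp only [Algebra.algebraMap_self, RingHom.id_apply]
  field_simp

lemma mv_aeval_eq_eval {k : ℕ} (f : Fin k → ℂ) (p : MvPolynomial (Fin k) ℂ) :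
    MvPolynomial.aeval f p = MvPolynomial.eval f p := by
  rw [MvPolynomial.aeval_def, MvPolynomial.eval, MvPolynomial.coe_eval₂Hom,
    Algebra.algebraMap_self]

open Polynomial Finset in
/-- The semi-local bifurcation set
`B_G = {σ : Q_σ has two distinct critical points with equal critical values}`
is contained in a proper algebraic subset of `ℂⁿ`. -/
theorem stmt_5 (n : ℕ) (hn : 2 ≤ n) :
    ∃ P : MvPolynomial (Fin n) ℂ, P ≠ 0 ∧
      ∀ σ : Fin n → ℂ,
        (∃ t₁ t₂ : ℂ, t₁ ≠ t₂ ∧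
          (Polynomial.derivative (genMonic n σ)).eval t₁ = 0 ∧
          (Polynomial.derivative (genMonic n σ)).eval t₂ = 0 ∧
          (genMonic n σ).eval t₁ = (genMonic n σ).eval t₂) →
        MvPolynomial.eval σ P = 0 := by
  obtain ⟨m, rfl⟩ : ∃ m, n = m + 1 := ⟨n - 1, by omega⟩
  have hm : 1 ≤ m := by omega
  have hne1 : ((m:ℂ)+1) ≠ 0 := Nat.cast_add_one_ne_zero m
  obtain ⟨G, hG⟩ := MvPolynomial.esymmAlgHom_fin_surjective (R := ℂ) (n := m+1)
    (Nat.le_succ m) ⟨Fsym m, Fsym_isSymmetric m⟩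
  have hGF : MvPolynomial.aeval
      (fun i : Fin (m+1) => MvPolynomial.esymm (Fin m) ℂ ((i:ℕ) + 1)) G = Fsym m := by
    have h := congrArg Subtype.val hG
    rwa [MvPolynomial.esymmAlgHom_apply] at h
  set P : MvPolynomial (Fin (m+1)) ℂ :=
    MvPolynomial.aeval (fun i : Fin (m+1) =>
      MvPolynomial.C (((m:ℂ) - (i:ℕ)) / ((m:ℂ)+1)) * MvPolynomial.X i) G with hPdef
  have key : ∀ (σ : Fin (m+1) → ℂ) (r : Fin m → ℂ),
      (∏ i, (X - C (r i)) = Wpoly m σ) →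
      MvPolynomial.eval σ P = ∏ p ∈ Finset.univ.offDiag,
        (Polynomial.eval (r p.1) (genMonic (m+1) σ)
          - Polynomial.eval (r p.2) (genMonic (m+1) σ)) := by
    intro σ r hr
    have hA : MvPolynomial.eval σ P
        = MvPolynomial.aeval (fun i : Fin (m+1) =>
            (((m:ℂ) - (i:ℕ)) / ((m:ℂ)+1)) * σ i) G := by
      rw [hPdef, ← mv_aeval_eq_eval, MvPolynomial.comp_aeval_apply]
      have h : (fun i : Fin (m+1) => MvPolynomial.aeval σ
            (MvPolynomial.C (((m:ℂ) - (i:ℕ)) / ((m:ℂ)+1)) * MvPolynomial.X i))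
          = fun i : Fin (m+1) => (((m:ℂ) - (i:ℕ)) / ((m:ℂ)+1)) * σ i := by
        funext i; rw [map_mul, MvPolynomial.aeval_C, MvPolynomial.aeval_X]; rfl
      rw [h]
    have hB : MvPolynomial.aeval r (Fsym m)
        = MvPolynomial.aeval (fun i : Fin (m+1) =>
            (((m:ℂ) - (i:ℕ)) / ((m:ℂ)+1)) * σ i) G := by
      rw [← hGF, MvPolynomial.comp_aeval_apply]
      have h : (fun i : Fin (m+1) => MvPolynomial.aeval r (MvPolynomial.esymm (Fin m) ℂ ((i:ℕ) + 1)))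
          = fun i : Fin (m+1) => (((m:ℂ) - (i:ℕ)) / ((m:ℂ)+1)) * σ i := by
        funext i; exact aeval_esymm_eq m σ r hr i
      rw [h]
    rw [hA, ← hB]
    unfold Fsym
    rw [map_prod]
    apply Finset.prod_congr rfl
    intro p _
    rw [map_sub, aeval_Qhat m σ r hr, aeval_Qhat m σ r hr, sub_sub_sub_cancel_right]
  refine ⟨P, ?_, ?_⟩
  · -- nonvanishing at σ' giving Q = t^(m+1) - (m+1) t
    have hmC : (m:ℂ) ≠ 0 := Nat.cast_ne_zero.mpr (by omega)
    set σ' : Fin (m+1) → ℂ :=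
      fun i => if (i:ℕ) = m - 1 then (-1)^(m+1) * ((m:ℂ)+1) else 0 with hσ'
    set j0 : Fin m := ⟨m-1, by omega⟩ with hj0
    have hj0v : (j0:ℕ) = m - 1 := rfl
    have hcast1 : ((m-1 : ℕ) : ℂ) = (m:ℂ) - 1 := by
      push_cast [Nat.cast_sub hm]; ring
    have hsgn : ((-1:ℂ))^((m-1)+1) = (-1)^m := by
      congr 1; omega
    have hW : Wpoly m σ' = X ^ m - C 1 := by
      unfold Wpoly
      rw [Finset.sum_eq_single j0]
      · have e1 : m - ((j0:ℕ)+1) = 0 := by rw [hj0v]; omega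
        have hval : σ' j0.castSucc = (-1)^(m+1) * ((m:ℂ)+1) := by
          have h9 : ((j0.castSucc : Fin (m+1)):ℕ) = m - 1 := hj0v
          simp only [hσ', h9, if_true]
        rw [e1, pow_zero, mul_one, hval, hj0v, hcast1, hsgn]
        have hval2 : ((-1:ℂ))^m * (((m:ℂ) - ((m:ℂ)-1)) / ((m:ℂ)+1)) * ((-1)^(m+1) * ((m:ℂ)+1))
            = -1 := by
          have h2 : ((-1:ℂ))^m * (-1)^(m+1) = -1 := by
            rw [← pow_add]
            exact Odd.neg_one_pow ⟨m, by ring⟩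
          rw [show ((-1:ℂ))^m * (((m:ℂ) - ((m:ℂ)-1)) / ((m:ℂ)+1)) * ((-1)^(m+1) * ((m:ℂ)+1))
            = ((-1:ℂ))^m * (-1)^(m+1) * (((m:ℂ) - ((m:ℂ)-1)) * (((m:ℂ)+1) / ((m:ℂ)+1)))
            from by ring, h2, div_self hne1]
          ring
        rw [hval2, map_neg, map_one, sub_eq_add_neg]
      · intro j _ hj
        have hjv : ((j.castSucc : Fin (m+1)):ℕ) = (j:ℕ) := rfl
        have : σ' j.castSucc = 0 := by
          have hne' : ((j.castSucc : Fin (m+1)):ℕ) ≠ m - 1 := by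
            rw [hjv]
            intro h
            exact hj (Fin.ext (by rw [hj0v]; exact h))
          simp only [hσ']
          exact if_neg hne'
        rw [this, mul_zero, map_zero, zero_mul]
      · intro h; exact absurd (Finset.mem_univ j0) h
    obtain ⟨r, hmap, hprod⟩ := exists_roots_fn m σ'
    have hnodup : ((Wpoly m σ').roots).Nodup := by
      rw [hW]
      have hnd := (Complex.isPrimitiveRoot_exp m (by omega)).nthRoots_one_nodup
      simpa [Polynomial.nthRoots] using hnd
    have hinj : ∀ x y : Fin m, x ≠ y → r x ≠ r y := by
      rw [← hmap] at hnodup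
      intro x y hxy heq
      exact hxy (Multiset.inj_on_of_nodup_map hnodup x
        (Finset.mem_val.mpr (Finset.mem_univ x)) y (Finset.mem_val.mpr (Finset.mem_univ y)) heq)
    have hpow : ∀ i, (r i)^m = 1 := by
      intro i
      have hmem : r i ∈ (Wpoly m σ').roots := by
        rw [← hmap]
        exact Multiset.mem_map_of_mem r (Finset.mem_val.mpr (Finset.mem_univ i))
      have hisr := Polynomial.isRoot_of_mem_roots hmem
      rw [hW] at hisr
      simpa [Polynomial.IsRoot, sub_eq_zero] using hisr
    set j1 : Fin (m+1) := ⟨m-1, by omega⟩ with hj1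
    have hj1v : (j1:ℕ) = m - 1 := rfl
    have hQ : ∀ i, Polynomial.eval (r i) (genMonic (m+1) σ') = -(m:ℂ) * r i := by
      intro i
      unfold genMonic
      rw [eval_add, eval_pow, eval_X, eval_finset_sum]
      rw [Finset.sum_eq_single j1]
      · have e1 : (m+1) - ((j1:ℕ)+1) = 1 := by rw [hj1v]; omega
        have hval : σ' j1 = (-1)^(m+1) * ((m:ℂ)+1) := by
          simp only [hσ', hj1v, if_true]
        rw [e1, hval, hj1v, eval_mul, eval_C, eval_pow, eval_X, pow_one, hsgn]
        have h2 : ((-1:ℂ))^m * ((-1)^(m+1) * ((m:ℂ)+1)) = -((m:ℂ)+1) := by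
          rw [← mul_assoc, ← pow_add, Odd.neg_one_pow ⟨m, by ring⟩]; ring
        rw [h2, pow_succ, hpow i, one_mul]
        ring
      · intro j _ hj
        have : σ' j = 0 := by
          have hne' : (j:ℕ) ≠ m - 1 := by
            intro h
            exact hj (Fin.ext (by rw [hj1v]; exact h))
          simp only [hσ']
          exact if_neg hne'
        rw [this, mul_zero, map_zero, zero_mul, eval_zero]
      · intro h; exact absurd (Finset.mem_univ j1) h
    intro hP0
    have hzero := key σ' r hprod
    rw [hP0, map_zero] at hzero
    have hfac : ∀ p ∈ Finset.univ.offDiag,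
        (Polynomial.eval (r (p : Fin m × Fin m).1) (genMonic (m+1) σ')
          - Polynomial.eval (r p.2) (genMonic (m+1) σ')) ≠ 0 := by
      intro p hp
      obtain ⟨-, -, hpq⟩ := Finset.mem_offDiag.mp hp
      rw [hQ, hQ]
      intro hc
      apply hinj _ _ hpq
      have : (-(m:ℂ)) * (r p.1 - r p.2) = 0 := by rw [mul_sub]; linear_combination hc
      rcases mul_eq_zero.mp this with h | h
      · exact absurd (neg_eq_zero.mp h) hmC
      · exact sub_eq_zero.mp h
    exact (Finset.prod_ne_zero_iff.mpr hfac) hzero.symm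
  · rintro σ ⟨t₁, t₂, hne, hd1, hd2, heq⟩
    obtain ⟨r, hmap, hprod⟩ := exists_roots_fn m σ
    have hroot : ∀ t : ℂ, Polynomial.eval t (Polynomial.derivative (genMonic (m+1) σ)) = 0 →
        ∃ a : Fin m, r a = t := by
      intro t ht
      rw [derivative_genMonic, eval_mul, eval_C, mul_eq_zero] at ht
      rcases ht with h | h
      · exact absurd h hne1
      · rw [← hprod, eval_prod] at h
        obtain ⟨a, _, ha⟩ := Finset.prod_eq_zero_iff.mp h
        rw [eval_sub, eval_X, eval_C, sub_eq_zero] at ha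
        exact ⟨a, ha.symm⟩
    obtain ⟨a, ha⟩ := hroot t₁ hd1
    obtain ⟨b, hb⟩ := hroot t₂ hd2
    have hab : a ≠ b := by
      intro h; apply hne; rw [← ha, ← hb, h]
    rw [key σ r hprod]
    apply Finset.prod_eq_zero (i := (a, b)) (Finset.mem_offDiag.mpr ⟨Finset.mem_univ _,
      Finset.mem_univ _, hab⟩)
    rw [ha, hb, heq, sub_self]
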